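/- In a discounted MDP, if the improvement set T^π of a policy π is empty, then π is optimal: for every policy π' and every state s, v^{π'}(s) ≤ v^π(s). -/

import Mathlib

/-- The transition matrix induced by a policy. -/
noncomputable def polMatrix {n k : ℕ} (P : Fin n → Fin k → Fin n → ℝ)
    (π : Fin n → Fin k) : Matrix (Fin n) (Fin n) ℝ :=
  Matrix.of fun s s' => P s (π s) s'

/-- The reward vector induced by a policy. -/
noncomputable def polReward {n k : ℕ} (r : Fin n → Fin k → ℝ)
    (π : Fin n → Fin k) : Fin n → ℝ :=
  fun s => r s (π s)

/-- The value vector of a policy: `v^π = ∑_{i=0}^∞ γ^i (P^π)^i r^π`. -/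
noncomputable def polValue {n k : ℕ} (P : Fin n → Fin k → Fin n → ℝ)
    (r : Fin n → Fin k → ℝ) (γ : ℝ) (π : Fin n → Fin k) : Fin n → ℝ :=
  ∑' i : ℕ, γ ^ i • (polMatrix P π ^ i).mulVec (polReward r π)

/-- `π ⪯ π'` : the policy `π'` dominates `π`. -/
def Dominates {n k : ℕ} (P : Fin n → Fin k → Fin n → ℝ) (r : Fin n → Fin k → ℝ)
    (γ : ℝ) (π π' : Fin n → Fin k) : Prop :=
  ∀ s, polValue P r γ π s ≤ polValue P r γ π' s

/-- `π ≺ π'` : the policy `π'` strictly dominates `π`. -/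
def StrictDominates {n k : ℕ} (P : Fin n → Fin k → Fin n → ℝ) (r : Fin n → Fin k → ℝ)
    (γ : ℝ) (π π' : Fin n → Fin k) : Prop :=
  Dominates P r γ π π' ∧ ∃ s, polValue P r γ π s < polValue P r γ π' s

/-- A set of state-action pairs is well-defined if it contains each state at most once. -/
def WellDefined {n k : ℕ} (U : Set (Fin n × Fin k)) : Prop :=
  ∀ s a a', (s, a) ∈ U → (s, a') ∈ U → a = a'

-- `π ⊕ U` : the policy obtained from `π` by switching the action at `s` to `a`
-- for each `(s, a) ∈ U` (intended for well-defined `U`).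
open Classical in
noncomputable def switch {n k : ℕ} (π : Fin n → Fin k) (U : Set (Fin n × Fin k)) :
    Fin n → Fin k :=
  fun s => if h : ∃ a, (s, a) ∈ U then h.choose else π s

/-- The improvement set `T^π = {(s,a) : π ⊕ {(s,a)} ≻ π}`. -/
def improvementSet {n k : ℕ} (P : Fin n → Fin k → Fin n → ℝ) (r : Fin n → Fin k → ℝ)
    (γ : ℝ) (π : Fin n → Fin k) : Set (Fin n × Fin k) :=
  {p | StrictDominates P r γ π (Function.update π p.1 p.2)}

/-- The set of improvement states `S^π`. -/
def improvementStates {n k : ℕ} (P : Fin n → Fin k → Fin n → ℝ) (r : Fin n → Fin k → ℝ)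
    (γ : ℝ) (π : Fin n → Fin k) : Set (Fin n) :=
  {s | ∃ a, (s, a) ∈ improvementSet P r γ π}

open Matrix


section AuxMDP
variable {n : ℕ}

/-- A stochastic matrix: nonnegative entries, rows summing to 1. -/
def IsStoch (M : Matrix (Fin n) (Fin n) ℝ) : Prop :=
  (∀ s s', 0 ≤ M s s') ∧ (∀ s, ∑ s', M s s' = 1)

lemma IsStoch.pow {M : Matrix (Fin n) (Fin n) ℝ} (h : IsStoch M) (i : ℕ) :
    IsStoch (M ^ i) := by
  induction i with
  | zero =>
    refine ⟨fun s s' => ?_, fun s => ?_⟩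
    · simp only [pow_zero, Matrix.one_apply]
      split <;> norm_num
    · simp [pow_zero, Matrix.one_apply, Finset.sum_ite_eq']
  | succ i ih =>
    rw [pow_succ]
    refine ⟨fun s s' => ?_, fun s => ?_⟩
    · rw [Matrix.mul_apply]
      exact Finset.sum_nonneg fun t _ => mul_nonneg (ih.1 s t) (h.1 t s')
    · simp only [Matrix.mul_apply]
      rw [Finset.sum_comm]
      calc ∑ t, ∑ s', (M ^ i) s t * M t s' = ∑ t, (M ^ i) s t * ∑ s', M t s' := by
            simp [Finset.mul_sum]
        _ = 1 := by simp [h.2, ih.2 s]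

lemma IsStoch.mulVec_abs_le {M : Matrix (Fin n) (Fin n) ℝ} (h : IsStoch M)
    (x : Fin n → ℝ) (s : Fin n) : |M.mulVec x s| ≤ ‖x‖ := by
  rw [Matrix.mulVec, dotProduct]
  calc |∑ s', M s s' * x s'| ≤ ∑ s', |M s s' * x s'| := Finset.abs_sum_le_sum_abs _ _
    _ ≤ ∑ s', M s s' * ‖x‖ := by
        refine Finset.sum_le_sum fun s' _ => ?_
        rw [abs_mul, abs_of_nonneg (h.1 s s')]
        exact mul_le_mul_of_nonneg_left (norm_le_pi_norm x s') (h.1 s s')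
    _ = ‖x‖ := by rw [← Finset.sum_mul, h.2 s, one_mul]

lemma IsStoch.mulVec_norm_le {M : Matrix (Fin n) (Fin n) ℝ} (h : IsStoch M)
    (x : Fin n → ℝ) : ‖M.mulVec x‖ ≤ ‖x‖ := by
  refine (pi_norm_le_iff_of_nonneg (norm_nonneg x)).2 fun s => ?_
  simpa [Real.norm_eq_abs] using h.mulVec_abs_le x s

variable {γ : ℝ}

lemma norm_term_le {M : Matrix (Fin n) (Fin n) ℝ} (h : IsStoch M) (hγ0 : 0 ≤ γ)
    (x : Fin n → ℝ) (i : ℕ) : ‖γ ^ i • (M ^ i).mulVec x‖ ≤ γ ^ i * ‖x‖ := by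
  rw [norm_smul, Real.norm_eq_abs, abs_of_nonneg (pow_nonneg hγ0 i)]
  exact mul_le_mul_of_nonneg_left ((h.pow i).mulVec_norm_le x) (pow_nonneg hγ0 i)

lemma summable_series {M : Matrix (Fin n) (Fin n) ℝ} (h : IsStoch M)
    (hγ0 : 0 ≤ γ) (hγ1 : γ < 1) (x : Fin n → ℝ) :
    Summable (fun i : ℕ => γ ^ i • (M ^ i).mulVec x) := by
  refine Summable.of_norm_bounded (g := fun i => γ ^ i * ‖x‖)
    ((summable_geometric_of_lt_one hγ0 hγ1).mul_right _) (norm_term_le h hγ0 x)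

lemma summable_series_apply {M : Matrix (Fin n) (Fin n) ℝ} (h : IsStoch M)
    (hγ0 : 0 ≤ γ) (hγ1 : γ < 1) (x : Fin n → ℝ) (s : Fin n) :
    Summable (fun i : ℕ => (γ ^ i • (M ^ i).mulVec x) s) := by
  refine Summable.of_norm_bounded (g := fun i => γ ^ i * ‖x‖)
    ((summable_geometric_of_lt_one hγ0 hγ1).mul_right _) (fun i => ?_)
  calc ‖(γ ^ i • (M ^ i).mulVec x) s‖ ≤ ‖γ ^ i • (M ^ i).mulVec x‖ := norm_le_pi_norm _ s
    _ ≤ γ ^ i * ‖x‖ := norm_term_le h hγ0 x i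

/-- Telescoping identity: `∑' i, γ^i M^i ((I - γM) w) = w`. -/
lemma tsum_telescope {M : Matrix (Fin n) (Fin n) ℝ} (h : IsStoch M)
    (hγ0 : 0 ≤ γ) (hγ1 : γ < 1) (w : Fin n → ℝ) :
    ∑' i : ℕ, γ ^ i • (M ^ i).mulVec (w - γ • M.mulVec w) = w := by
  set f : ℕ → Fin n → ℝ := fun i => γ ^ i • (M ^ i).mulVec w with hf
  have hterm : (fun i : ℕ => γ ^ i • (M ^ i).mulVec (w - γ • M.mulVec w))
      = fun i => f i - f (i + 1) := by
    funext i
    simp only [hf, Matrix.mulVec_sub, smul_sub]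
    congr 1
    rw [pow_succ, Matrix.mulVec_smul, smul_smul, ← pow_succ]
    congr 1
    rw [pow_succ, ← Matrix.mulVec_mulVec]
  have hsum : Summable (fun i : ℕ => γ ^ i • (M ^ i).mulVec (w - γ • M.mulVec w)) :=
    summable_series h hγ0 hγ1 _
  rw [hterm] at hsum ⊢
  have : HasSum (fun i => f i - f (i + 1)) w := by
    rw [hsum.hasSum_iff_tendsto_nat]
    have hps : ∀ N : ℕ, ∑ i ∈ Finset.range N, (f i - f (i + 1)) = f 0 - f N :=
      fun N => Finset.sum_range_sub' f N
    simp only [hps]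
    have hf0 : f 0 = w := by simp [hf]
    rw [hf0]
    have : Filter.Tendsto (fun N : ℕ => f N) Filter.atTop (nhds 0) := by
      rw [tendsto_zero_iff_norm_tendsto_zero]
      refine squeeze_zero (fun N => norm_nonneg _) (fun N => norm_term_le h hγ0 w N) ?_
      simpa using (tendsto_pow_atTop_nhds_zero_of_lt_one hγ0 hγ1).mul_const ‖w‖
    simpa using (tendsto_const_nhds (x := w)).sub this
  exact this.tsum_eq

end AuxMDP

section MDP
variable {n k : ℕ} {P : Fin n → Fin k → Fin n → ℝ} {r : Fin n → Fin k → ℝ} {γ : ℝ}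

lemma polMatrix_stoch (hP0 : ∀ s a s', 0 ≤ P s a s') (hP1 : ∀ s a, ∑ s', P s a s' = 1)
    (π : Fin n → Fin k) : IsStoch (polMatrix P π) :=
  ⟨fun s s' => hP0 s (π s) s', fun s => hP1 s (π s)⟩





/-- decomposition: for any w, w = polValue + ∑' γ^i M^i d where d = w - γMw - r. -/
lemma value_decomp (hP0 : ∀ s a s', 0 ≤ P s a s') (hP1 : ∀ s a, ∑ s', P s a s' = 1)
    (hγ0 : 0 ≤ γ) (hγ1 : γ < 1) (π : Fin n → Fin k) (w : Fin n → ℝ) :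
    w = polValue P r γ π +
      ∑' i : ℕ, γ ^ i • ((polMatrix P π) ^ i).mulVec
        (w - γ • (polMatrix P π).mulVec w - polReward r π) := by
  have hM := polMatrix_stoch hP0 hP1 π
  have h1 : ∀ i : ℕ, γ ^ i • ((polMatrix P π) ^ i).mulVec (w - γ • (polMatrix P π).mulVec w)
      = γ ^ i • ((polMatrix P π) ^ i).mulVec (polReward r π)
        + γ ^ i • ((polMatrix P π) ^ i).mulVec
            (w - γ • (polMatrix P π).mulVec w - polReward r π) := by
    intro i
    rw [← smul_add, ← Matrix.mulVec_add]
    congr 1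
    abel
  calc w = ∑' i : ℕ, γ ^ i • ((polMatrix P π) ^ i).mulVec (w - γ • (polMatrix P π).mulVec w) :=
        (tsum_telescope hM hγ0 hγ1 w).symm
    _ = _ := by
        rw [funext h1, Summable.tsum_add (summable_series hM hγ0 hγ1 _) (summable_series hM hγ0 hγ1 _)]
        rfl

/-- Nonnegativity of the correction series, pointwise. -/
lemma series_nonneg {M : Matrix (Fin n) (Fin n) ℝ} (hM : IsStoch M)
    (hγ0 : 0 ≤ γ) (hγ1 : γ < 1) {d : Fin n → ℝ} (hd : ∀ s, 0 ≤ d s) (s : Fin n) :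
    0 ≤ (∑' i : ℕ, γ ^ i • (M ^ i).mulVec d) s := by
  rw [tsum_apply (summable_series hM hγ0 hγ1 d)]
  refine tsum_nonneg fun i => ?_
  simp only [Pi.smul_apply, smul_eq_mul, Matrix.mulVec, dotProduct]
  refine mul_nonneg (pow_nonneg hγ0 i) ?_
  exact Finset.sum_nonneg fun t _ => mul_nonneg ((hM.pow i).1 s t) (hd t)

/-- The correction series at s is at least its i = 0 term, d s. -/
lemma series_ge_first {M : Matrix (Fin n) (Fin n) ℝ} (hM : IsStoch M)
    (hγ0 : 0 ≤ γ) (hγ1 : γ < 1) {d : Fin n → ℝ} (hd : ∀ s, 0 ≤ d s) (s : Fin n) :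
    d s ≤ (∑' i : ℕ, γ ^ i • (M ^ i).mulVec d) s := by
  rw [tsum_apply (summable_series hM hγ0 hγ1 d)]
  have h0 : (γ ^ 0 • (M ^ 0).mulVec d) s = d s := by simp
  rw [← h0]
  refine Summable.le_tsum (summable_series_apply hM hγ0 hγ1 d s) 0 fun i _ => ?_
  simp only [Pi.smul_apply, smul_eq_mul, Matrix.mulVec, dotProduct]
  refine mul_nonneg (pow_nonneg hγ0 i) ?_
  exact Finset.sum_nonneg fun t _ => mul_nonneg ((hM.pow i).1 s t) (hd t)

/-- Bellman equation. -/
lemma bellman (hP0 : ∀ s a s', 0 ≤ P s a s') (hP1 : ∀ s a, ∑ s', P s a s' = 1)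
    (hγ0 : 0 ≤ γ) (hγ1 : γ < 1) (π : Fin n → Fin k) :
    polValue P r γ π = polReward r π + γ • (polMatrix P π).mulVec (polValue P r γ π) := by
  have hM := polMatrix_stoch hP0 hP1 π
  set M := polMatrix P π
  set rπ := polReward r π
  have hsum := summable_series hM hγ0 hγ1 rπ
  set Lc : (Fin n → ℝ) →L[ℝ] (Fin n → ℝ) :=
    LinearMap.toContinuousLinearMap (γ • Matrix.mulVecLin M) with hLc
  have happ : ∀ x, Lc x = γ • M.mulVec x := fun x => rfl
  have key : polValue P r γ π = (γ ^ 0 • (M ^ 0).mulVec rπ)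
      + ∑' i : ℕ, γ ^ (i + 1) • (M ^ (i + 1)).mulVec rπ :=
    Summable.tsum_eq_zero_add hsum
  have h2 : ∀ i : ℕ, γ ^ (i + 1) • (M ^ (i + 1)).mulVec rπ
      = Lc (γ ^ i • (M ^ i).mulVec rπ) := by
    intro i
    rw [happ, Matrix.mulVec_smul, smul_smul, pow_succ']
    congr 1
    rw [pow_succ', ← Matrix.mulVec_mulVec]
  have tail : (∑' i : ℕ, γ ^ (i + 1) • (M ^ (i + 1)).mulVec rπ)
      = γ • M.mulVec (polValue P r γ π) := by
    rw [funext h2, ← Lc.map_tsum hsum, happ]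
    rfl
  conv_lhs => rw [key]
  rw [tail]
  congr 1
  simp

/-- If w satisfies the Bellman inequality for π', then polValue π' ≤ w. -/
lemma value_le_of_bellman_le (hP0 : ∀ s a s', 0 ≤ P s a s')
    (hP1 : ∀ s a, ∑ s', P s a s' = 1) (hγ0 : 0 ≤ γ) (hγ1 : γ < 1)
    (π' : Fin n → Fin k) (w : Fin n → ℝ)
    (hw : ∀ s, polReward r π' s + γ * (polMatrix P π').mulVec w s ≤ w s) :
    ∀ s, polValue P r γ π' s ≤ w s := by
  intro s
  have hM := polMatrix_stoch hP0 hP1 π'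
  have hd : ∀ t, 0 ≤ (w - γ • (polMatrix P π').mulVec w - polReward r π') t := by
    intro t
    have := hw t
    simp only [Pi.sub_apply, Pi.smul_apply, smul_eq_mul]
    linarith
  have := value_decomp (r := r) hP0 hP1 hγ0 hγ1 π' w
  have h2 := series_nonneg hM hγ0 hγ1 hd s
  calc polValue P r γ π' s ≤ polValue P r γ π' s
      + (∑' i : ℕ, γ ^ i • ((polMatrix P π') ^ i).mulVec
          (w - γ • (polMatrix P π').mulVec w - polReward r π')) s := by linarith
    _ = w s := by rw [← Pi.add_apply, ← this]



lemma no_improvement_bellman (hP0 : ∀ s a s', 0 ≤ P s a s')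
    (hP1 : ∀ s a, ∑ s', P s a s' = 1) (hγ0 : 0 ≤ γ) (hγ1 : γ < 1)
    (π : Fin n → Fin k) (hT : improvementSet P r γ π = ∅) (s : Fin n) (a : Fin k) :
    r s a + γ * ∑ s', P s a s' * polValue P r γ π s' ≤ polValue P r γ π s := by
  by_contra hcon
  push_neg at hcon
  set π'' := Function.update π s a with hπ''
  set M := polMatrix P π'' with hMdef
  set v := polValue P r γ π with hv
  have hM : IsStoch M := polMatrix_stoch hP0 hP1 π''
  set d : Fin n → ℝ := polReward r π'' + γ • M.mulVec v - v with hd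
  have hB := bellman (r := r) hP0 hP1 hγ0 hγ1 π
  have hrow : ∀ t, t ≠ s → M.mulVec v t = (polMatrix P π).mulVec v t := by
    intro t ht
    simp only [Matrix.mulVec, dotProduct, hMdef, polMatrix, Matrix.of_apply, hπ'',
      Function.update_of_ne ht]
  have hds : 0 < d s := by
    have hMs : M.mulVec v s = ∑ s', P s a s' * v s' := by
      simp only [Matrix.mulVec, dotProduct, hMdef, polMatrix, Matrix.of_apply, hπ'',
        Function.update_self]
    simp only [hd, Pi.sub_apply, Pi.add_apply, Pi.smul_apply, smul_eq_mul, hMs,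
      polReward, hπ'', Function.update_self]
    linarith
  have hd0 : ∀ t, 0 ≤ d t := by
    intro t
    by_cases ht : t = s
    · subst ht; exact le_of_lt hds
    · have h1 : polReward r π'' t = polReward r π t := by
        simp [polReward, hπ'', Function.update_of_ne ht]
      have h2 := congrFun hB t
      simp only [hd, Pi.sub_apply, Pi.add_apply, Pi.smul_apply, smul_eq_mul, h1,
        hrow t ht]
      simp only [Pi.add_apply, Pi.smul_apply, smul_eq_mul] at h2
      linarith
  -- decomposition with w = v over policy π''
  have hdec := value_decomp (r := r) hP0 hP1 hγ0 hγ1 π'' v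
  have hneg : (v - γ • M.mulVec v - polReward r π'') = -d := by
    simp only [hd]; abel
  rw [hneg] at hdec
  have hminus : (∑' i : ℕ, γ ^ i • (M ^ i).mulVec (-d))
      = -(∑' i : ℕ, γ ^ i • (M ^ i).mulVec d) := by
    rw [← tsum_neg]
    congr 1
    funext i
    rw [Matrix.mulVec_neg, smul_neg]
  rw [hminus] at hdec
  set S := ∑' i : ℕ, γ ^ i • (M ^ i).mulVec d with hS
  have hval : polValue P r γ π'' = v + S := by
    have := hdec
    funext t
    have ht := congrFun this t
    simp only [Pi.add_apply, Pi.neg_apply] at ht ⊢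
    linarith
  have hmem : (s, a) ∈ improvementSet P r γ π := by
    refine ⟨fun t => ?_, ⟨s, ?_⟩⟩
    · rw [show Function.update π (s, a).1 (s, a).2 = π'' from rfl, hval]
      have := series_nonneg hM hγ0 hγ1 hd0 t
      simp only [Pi.add_apply]
      rw [← hS] at this
      linarith
    · rw [show Function.update π (s, a).1 (s, a).2 = π'' from rfl, hval]
      have h1 := series_ge_first hM hγ0 hγ1 hd0 s
      rw [← hS] at h1
      simp only [Pi.add_apply]
      linarith
  rw [hT] at hmem
  exact hmem


end MDP

theorem empty_improvement_set_optimal (n k : ℕ) (hn : 1 ≤ n) (hk : 1 ≤ k)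
    (P : Fin n → Fin k → Fin n → ℝ) (r : Fin n → Fin k → ℝ) (γ : ℝ)
    (hP0 : ∀ s a s', 0 ≤ P s a s') (hP1 : ∀ s a, ∑ s', P s a s' = 1)
    (hγ0 : 0 ≤ γ) (hγ1 : γ < 1)
    (π : Fin n → Fin k) (hT : improvementSet P r γ π = ∅) :
    ∀ π' : Fin n → Fin k, ∀ s, polValue P r γ π' s ≤ polValue P r γ π s := by
  intro π' s
  refine value_le_of_bellman_le hP0 hP1 hγ0 hγ1 π' (polValue P r γ π) (fun t => ?_) s
  have h := no_improvement_bellman hP0 hP1 hγ0 hγ1 π hT t (π' t)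
  simpa [polReward, polMatrix, Matrix.mulVec, dotProduct] using h
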